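/- For every integer k ≥ 2 and every chord diagram d, the value R_k(d) is congruent modulo 2 to the number E_{2k}(γ(d)) of 2k-cycles in the intersection graph of d. -/

import Mathlib

open Finset
open scoped Classical

/-- The cyclic successor of an element of `Fin m`. -/
def cyclicSucc {m : ℕ} (a : Fin m) : Fin m :=
  ⟨((a : ℕ) + 1) % m, Nat.mod_lt _ a.pos⟩

/-- The cyclic predecessor of an element of `Fin m`. -/
def cyclicPred {m : ℕ} (a : Fin m) : Fin m :=
  ⟨((a : ℕ) + (m - 1)) % m, Nat.mod_lt _ a.pos⟩

/-- `f : Fin l → V` traces an `l`-cycle of `G`: it is injective and cyclically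
consecutive vertices are adjacent. -/
def IsCycleMap {V : Type} (G : SimpleGraph V) (l : ℕ) (f : Fin l → V) : Prop :=
  Function.Injective f ∧ ∀ i : Fin l, G.Adj (f i) (f (cyclicSucc i))

/-- The number `E_l(G)` of `l`-cycles of `G`, counted up to rotation and reflection
(each such cycle is traced by exactly `2 * l` maps `Fin l → V`). -/
noncomputable def cycleCount {V : Type} [Fintype V] (G : SimpleGraph V) (l : ℕ) : ℕ :=
  (Finset.univ.filter (fun f : Fin l → V => IsCycleMap G l f)).card / (2 * l)

/-- `o` is an orientation of `G`: every edge gets exactly one direction. -/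
def IsOrientation {V : Type} (G : SimpleGraph V) (o : V → V → Prop) : Prop :=
  ∀ ⦃x y : V⦄, G.Adj x y → (o x y ↔ ¬ o y x)

/-- The sign of a cycle map with respect to a direction relation `o`:
`+1` iff the number of edges agreeing with the traversal is even. -/
noncomputable def cycleSign {V : Type} {l : ℕ} (o : V → V → Prop) (f : Fin l → V) : ℤ :=
  (-1) ^ (Finset.univ.filter (fun i : Fin l => o (f i) (f (cyclicSucc i)))).card

/-- The sum of signs of all `l`-cycles of `G` (counted up to rotation and
reflection) with respect to the direction relation `o`. -/
noncomputable def signedCycleSum {V : Type} [Fintype V] (G : SimpleGraph V)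
    (o : V → V → Prop) (l : ℕ) : ℤ :=
  (∑ f ∈ Finset.univ.filter (fun f : Fin l → V => IsCycleMap G l f),
    cycleSign o f) / (2 * (l : ℤ))

/-- The graph `Γ'_AB`: toggle the adjacency between the vertices `A` and `B`. -/
def toggleEdge {V : Type} (G : SimpleGraph V) (A B : V) : SimpleGraph V where
  Adj x y := x ≠ y ∧ (G.Adj x y ↔ ¬((x = A ∧ y = B) ∨ (x = B ∧ y = A)))
  symm := ⟨by
    intro x y h
    obtain ⟨h1, h2⟩ := h
    refine ⟨h1.symm, ?_⟩
    rw [G.adj_comm]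
    tauto⟩
  loopless := ⟨fun x h => h.1 rfl⟩

/-- The graph `Γ̃_AB`: toggle the adjacency between `A` and every vertex
`C ∉ {A, B}` adjacent to `B` in `Γ`. -/
def tildeGraph {V : Type} (G : SimpleGraph V) (A B : V) : SimpleGraph V where
  Adj x y := x ≠ y ∧
    (G.Adj x y ↔ ¬((x = A ∧ y ≠ B ∧ G.Adj y B) ∨ (y = A ∧ x ≠ B ∧ G.Adj x B)))
  symm := ⟨by
    intro x y h
    obtain ⟨h1, h2⟩ := h
    refine ⟨h1.symm, ?_⟩
    rw [G.adj_comm]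
    tauto⟩
  loopless := ⟨fun x h => h.1 rfl⟩

/-- A chord diagram of order `n`: a partition of the `2 * n` cyclically ordered
points `0, 1, …, 2n - 1` into `n` two-element blocks (chords), here recorded by
the function assigning to each point its chord. -/
structure ChordDiagram (n : ℕ) where
  chord : Fin (2 * n) → Fin n
  fiber_two : ∀ i : Fin n, (Finset.univ.filter (fun x => chord x = i)).card = 2

namespace ChordDiagram

variable {n : ℕ}

/-- The pair of endpoints of the chord `i`. -/
def endpoints (d : ChordDiagram n) (i : Fin n) : Finset (Fin (2 * n)) :=
  Finset.univ.filter (fun x => d.chord x = i)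

lemma endpoints_nonempty (d : ChordDiagram n) (i : Fin n) : (d.endpoints i).Nonempty := by
  rw [← Finset.card_pos, endpoints, d.fiber_two]
  norm_num

/-- The smaller endpoint of the chord `i`. -/
def lo (d : ChordDiagram n) (i : Fin n) : Fin (2 * n) :=
  (d.endpoints i).min' (d.endpoints_nonempty i)

/-- The larger endpoint of the chord `i`. -/
def hi (d : ChordDiagram n) (i : Fin n) : Fin (2 * n) :=
  (d.endpoints i).max' (d.endpoints_nonempty i)

/-- Chords `i` and `j` cross: exactly one endpoint of `j` lies strictly between
the two endpoints of `i`. -/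
def Crosses (d : ChordDiagram n) (i j : Fin n) : Prop :=
  Xor' (d.lo i < d.lo j ∧ d.lo j < d.hi i) (d.lo i < d.hi j ∧ d.hi j < d.hi i)

/-- The intersection graph `γ(d)` of the chord diagram `d`. -/
def interGraph (d : ChordDiagram n) : SimpleGraph (Fin n) where
  Adj i j := i ≠ j ∧ (d.Crosses i j ∨ d.Crosses j i)
  symm := ⟨fun i j h => ⟨h.1.symm, h.2.symm⟩⟩
  loopless := ⟨fun i h => h.1 rfl⟩

lemma chord_lo (d : ChordDiagram n) (i : Fin n) : d.chord (d.lo i) = i := by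
  have h := (d.endpoints i).min'_mem (d.endpoints_nonempty i)
  exact (Finset.mem_filter.mp h).2

/-- An orientation of a chord diagram: a choice of a beginning point for each
chord (the other endpoint being its end). -/
def Orientation (d : ChordDiagram n) : Type :=
  { b : Fin n → Fin (2 * n) // ∀ i, d.chord (b i) = i }

/-- The end of the chord `i`, i.e. its endpoint other than the beginning. -/
def endOf (d : ChordDiagram n) (o : d.Orientation) (i : Fin n) : Fin (2 * n) :=
  if o.1 i = d.lo i then d.hi i else d.lo i

/-- The point `z` lies on the arc going in the positive direction from `a` to `b`. -/
def InArc {m : ℕ} (a b z : Fin m) : Prop :=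
  if a < b then a < z ∧ z < b else a < z ∨ z < b

/-- The direction induced by an orientation of the chords on the edges of the
intersection graph: the edge between `i` and `j` is directed from `i` to `j`
iff the beginning of `j` lies on the arc going in the positive direction from
the beginning of `i` to the end of `i`. -/
def dir (d : ChordDiagram n) (o : d.Orientation) (i j : Fin n) : Prop :=
  InArc (o.1 i) (d.endOf o i) (o.1 j)

/-- The canonical orientation: every chord begins at its smaller endpoint. -/
def canonical (d : ChordDiagram n) : d.Orientation :=
  ⟨d.lo, d.chord_lo⟩

end ChordDiagram

/-- The weight system `R_k`: the sum of the signs of the `2k`-cycles of the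
directed intersection graph (for the canonical orientation of the chords). -/
noncomputable def Rk (k : ℕ) {n : ℕ} (d : ChordDiagram n) : ℤ :=
  signedCycleSum d.interGraph (d.dir d.canonical) (2 * k)

/-- When the point at position `p` is moved to position `q` (keeping the relative
order of all the other points), `moveFun p q r` is the old position of the point
occupying the position `r` after the move. -/
def moveFun {m : ℕ} (p q : Fin m) (r : Fin m) : Fin m :=
  if r = q then p
  else if h : (p : ℕ) ≤ (r : ℕ) ∧ (r : ℕ) < (q : ℕ) then
    ⟨(r : ℕ) + 1, by have := q.isLt; omega⟩
  else if h' : (q : ℕ) < (r : ℕ) ∧ (r : ℕ) ≤ (p : ℕ) then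
    ⟨(r : ℕ) - 1, by have := r.isLt; omega⟩
  else r

/-- The invariant `w_C`: `1` if the adjacency matrix of the graph over `ZMod 2`
is nondegenerate, `0` otherwise. -/
noncomputable def wC {V : Type} [Fintype V] (G : SimpleGraph V) : ℤ :=
  if (G.adjMatrix (ZMod 2)).det ≠ 0 then 1 else 0

/-- All set partitions of `Fin n` into nonempty blocks. -/
noncomputable def finPartitions (n : ℕ) : Finset (Finset (Finset (Fin n))) :=
  Finset.univ.filter (fun P =>
    (∀ s ∈ P, s.Nonempty) ∧ ∀ x : Fin n, ∃! s, s ∈ P ∧ x ∈ s)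

/-- A `4`-invariant of finite simple graphs: an integer-valued, isomorphism
invariant function satisfying the `4`-term relation for graphs. -/
structure FourInvariant where
  val : ∀ n : ℕ, SimpleGraph (Fin n) → ℤ
  iso_invariant : ∀ {n m : ℕ} (G : SimpleGraph (Fin n)) (H : SimpleGraph (Fin m)),
    Nonempty (G ≃g H) → val n G = val m H
  four_term : ∀ (n : ℕ) (G : SimpleGraph (Fin n)) (A B : Fin n), A ≠ B →
    val n G - val n (toggleEdge G A B) =
      val n (tildeGraph G A B) - val n (toggleEdge (tildeGraph G A B) A B)

/-- The `5`-wheel: a `5`-cycle on the vertices `0, …, 4` together with the hub `5`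
adjacent to all five cycle vertices. -/
def wheel5 : SimpleGraph (Fin 6) :=
  SimpleGraph.fromRel (fun x y =>
    ((x : ℕ) = 5 ∧ (y : ℕ) < 5) ∨
    ((x : ℕ) < 5 ∧ (y : ℕ) < 5 ∧ (y : ℕ) = ((x : ℕ) + 1) % 5))

/-- The triangular prism: two triangles `{0, 1, 2}` and `{3, 4, 5}` joined by the
perfect matching `i — i + 3`. -/
def prism : SimpleGraph (Fin 6) :=
  SimpleGraph.fromRel (fun x y =>
    ((x : ℕ) < 3 ∧ (y : ℕ) < 3 ∧ x ≠ y) ∨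
    (3 ≤ (x : ℕ) ∧ 3 ≤ (y : ℕ) ∧ x ≠ y) ∨
    ((y : ℕ) = (x : ℕ) + 3))


section Aux

open Fin.CommRing

lemma cyclicSucc_eq_add_one {l : ℕ} [NeZero l] (a : Fin l) : cyclicSucc a = a + 1 := by
  apply Fin.ext
  simp [cyclicSucc, Fin.add_def, Fin.val_one', Nat.add_mod]

def gmap {l : ℕ} [NeZero l] (s : Bool) (r i : Fin l) : Fin l := if s then r - i else r + i

lemma gmap_comp {l : ℕ} [NeZero l] (s s' : Bool) (r r' : Fin l) :
    gmap s r ∘ gmap s' r' = gmap (xor s s') (if s then r - r' else r + r') := by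
  cases s <;> cases s' <;> funext i <;> simp [gmap] <;> ring

lemma gmap_injective {l : ℕ} [NeZero l] (s : Bool) (r : Fin l) :
    Function.Injective (gmap s r) := by
  cases s <;> intro a b h <;> simpa [gmap] using h

lemma gmap_zero {l : ℕ} [NeZero l] (s : Bool) (r : Fin l) : gmap s r 0 = r := by
  cases s <;> simp [gmap]

lemma gmap_id {l : ℕ} [NeZero l] : gmap (l := l) false 0 = id := by
  funext i; simp [gmap]

noncomputable def orbF {V : Type} {l : ℕ} [NeZero l] (f : Fin l → V) : Finset (Fin l → V) :=
  Finset.image (fun p : Bool × Fin l => f ∘ gmap p.1 p.2) Finset.univ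

lemma mem_orbF_iff {V : Type} {l : ℕ} [NeZero l] {f h : Fin l → V} :
    h ∈ orbF f ↔ ∃ s r, f ∘ gmap s r = h := by
  simp [orbF, Prod.exists]

lemma self_mem_orbF {V : Type} {l : ℕ} [NeZero l] (f : Fin l → V) : f ∈ orbF f := by
  rw [mem_orbF_iff]
  exact ⟨false, 0, by rw [gmap_id]; rfl⟩

lemma orbF_comp {V : Type} {l : ℕ} [NeZero l] (f : Fin l → V) (s : Bool) (r : Fin l) :
    orbF (f ∘ gmap s r) = orbF f := by
  ext h
  simp only [mem_orbF_iff]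
  constructor
  · rintro ⟨s', r', rfl⟩
    exact ⟨_, _, (congrArg (f ∘ ·) (gmap_comp s s' r r')).symm⟩
  · rintro ⟨t, u, rfl⟩
    refine ⟨xor s t, if s then r - u else u - r, ?_⟩
    rw [Function.comp_assoc, gmap_comp]
    cases s <;> cases t <;> simp <;> congr 1 <;> ring

lemma card_orbF {V : Type} {l : ℕ} [NeZero l] {f : Fin l → V} (hf : Function.Injective f)
    (hl : 3 ≤ l) : (orbF f).card = 2 * l := by
  rw [orbF, Finset.card_image_of_injective _ ?_, Finset.card_univ, Fintype.card_prod,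
    Fintype.card_bool, Fintype.card_fin]
  rintro ⟨s, r⟩ ⟨s', r'⟩ h
  have hg : gmap s r = gmap s' r' := by
    funext i
    exact hf (congrFun h i)
  have hr : r = r' := by
    have := congrFun hg 0
    rwa [gmap_zero, gmap_zero] at this
  subst hr
  have hss : s = s' := by
    by_contra hne
    have h2 : r - 1 = r + 1 := by
      have h1 := congrFun hg 1
      cases s <;> cases s' <;> simp_all [gmap]
    have h0 : (1 : Fin l) + 1 = 0 := by
      calc (1 : Fin l) + 1 = (r + 1) + (1 - r) := by ring
        _ = (r - 1) + (1 - r) := by rw [← h2]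
        _ = 0 := by ring
    have hv := congrArg Fin.val h0
    rw [Fin.add_def, Fin.val_one', Fin.val_zero] at hv
    have e1 : 1 % l = 1 := Nat.mod_eq_of_lt (by omega)
    simp only [Fin.val_mk] at hv
    rw [e1, Nat.mod_eq_of_lt (by omega)] at hv
    omega
  exact Prod.ext hss rfl

lemma isCycleMap_comp {V : Type} {l : ℕ} [NeZero l] {G : SimpleGraph V} {f : Fin l → V}
    (hf : IsCycleMap G l f) (s : Bool) (r : Fin l) : IsCycleMap G l (f ∘ gmap s r) := by
  obtain ⟨hinj, hadj⟩ := hf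
  refine ⟨hinj.comp (gmap_injective s r), fun i => ?_⟩
  rw [cyclicSucc_eq_add_one]
  cases s
  · simp only [gmap, Function.comp_apply, if_neg Bool.false_ne_true]
    have e : r + (i + 1) = (r + i) + 1 := by ring
    rw [e, ← cyclicSucc_eq_add_one]
    exact hadj (r + i)
  · simp only [gmap, Function.comp_apply, if_pos rfl]
    have e : r - i = (r - (i + 1)) + 1 := by ring
    rw [e, ← cyclicSucc_eq_add_one]
    exact (hadj (r - (i + 1))).symm

lemma cycleSign_rot {V : Type} {l : ℕ} [NeZero l] (o : V → V → Prop) (f : Fin l → V)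
    (r : Fin l) : cycleSign o (f ∘ gmap false r) = cycleSign o f := by
  unfold cycleSign
  congr 1
  apply Finset.card_bij' (fun i _ => r + i) (fun i _ => i - r)
  · intro i hi
    simp only [Finset.mem_filter, Finset.mem_univ, true_and] at hi ⊢
    rw [cyclicSucc_eq_add_one] at hi ⊢
    simp only [gmap, Function.comp_apply, if_neg Bool.false_ne_true] at hi
    have e : r + (i + 1) = (r + i) + 1 := by ring
    rwa [e] at hi
  · intro i hi
    simp only [Finset.mem_filter, Finset.mem_univ, true_and] at hi ⊢
    rw [cyclicSucc_eq_add_one] at hi ⊢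
    simp only [gmap, Function.comp_apply, if_neg Bool.false_ne_true]
    have e1 : r + (i - r) = i := by ring
    have e2 : r + (i - r + 1) = i + 1 := by ring
    rw [e1, e2]
    exact hi
  · intro i _; ring
  · intro i _; ring


lemma cycleSign_refl {V : Type} {l : ℕ} [NeZero l] {G : SimpleGraph V} {o : V → V → Prop}
    (ho : IsOrientation G o) {f : Fin l → V} (hf : IsCycleMap G l f) (hle : Even l)
    (r : Fin l) : cycleSign o (f ∘ gmap true r) = cycleSign o f := by
  unfold cycleSign
  set c := (Finset.univ.filter (fun i : Fin l => o (f i) (f (cyclicSucc i)))).card with hc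
  have hcard : (Finset.univ.filter
      (fun i : Fin l => o ((f ∘ gmap true r) i) ((f ∘ gmap true r) (cyclicSucc i)))).card
      = (Finset.univ.filter (fun j : Fin l => o (f (j + 1)) (f j))).card := by
    apply Finset.card_bij' (fun i _ => r - 1 - i) (fun j _ => r - 1 - j)
    · intro i hi
      simp only [Finset.mem_filter, Finset.mem_univ, true_and] at hi ⊢
      rw [cyclicSucc_eq_add_one] at hi
      simp only [gmap, Function.comp_apply, if_pos rfl] at hi
      have e1 : r - 1 - i + 1 = r - i := by ring
      have e2 : r - 1 - i = r - (i + 1) := by ring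
      rw [e1, e2]
      exact hi
    · intro j hj
      simp only [Finset.mem_filter, Finset.mem_univ, true_and] at hj ⊢
      rw [cyclicSucc_eq_add_one]
      simp only [gmap, Function.comp_apply, if_pos rfl]
      have e1 : r - (r - 1 - j) = j + 1 := by ring
      have e2 : r - (r - 1 - j + 1) = j := by ring
      rw [e1, e2]
      exact hj
    · intro i _; ring
    · intro j _; ring
  rw [hcard]
  have hfilter : (Finset.univ.filter (fun j : Fin l => o (f (j + 1)) (f j)))
      = Finset.univ.filter (fun j : Fin l => ¬ o (f j) (f (j + 1))) := by
    apply Finset.filter_congr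
    intro j _
    have hadj := hf.2 j
    rw [cyclicSucc_eq_add_one] at hadj
    rw [ho hadj.symm]
  rw [hfilter, Finset.filter_not, Finset.card_sdiff_of_subset (Finset.filter_subset _ _),
    Finset.card_univ, Fintype.card_fin]
  have hcle : c ≤ l := by
    rw [hc]
    calc _ ≤ Finset.univ.card := Finset.card_filter_le _ _
      _ = l := by rw [Finset.card_univ, Fintype.card_fin]
  have : (Finset.univ.filter (fun j : Fin l => o (f j) (f (j + 1)))).card = c := by
    rw [hc]
    congr 1
    apply Finset.filter_congr
    intro j _
    rw [cyclicSucc_eq_add_one]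
  rw [this]
  have h2 : (-1 : ℤ) ^ (l - c) = (-1) ^ (l - c) * ((-1) ^ 2) ^ c := by norm_num
  rw [h2, ← pow_mul, ← pow_add]
  have e : l - c + 2 * c = l + c := by omega
  rw [e, pow_add, hle.neg_one_pow, one_mul]


lemma signed_modEq_count {V : Type} [Fintype V] {l : ℕ} (hl : 3 ≤ l) (hle : Even l)
    (G : SimpleGraph V) (o : V → V → Prop) (ho : IsOrientation G o) :
    signedCycleSum G o l ≡ (cycleCount G l : ℤ) [ZMOD 2] := by
  haveI : NeZero l := ⟨by omega⟩
  classical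
  set C : Finset (Fin l → V) := Finset.univ.filter (fun f => IsCycleMap G l f) with hC
  set O : Finset (Finset (Fin l → V)) := C.image orbF with hO
  have hmaps : ∀ f ∈ C, orbF f ∈ O := fun f hf => Finset.mem_image_of_mem _ hf
  have fiber_eq : ∀ B ∈ O, C.filter (fun f => orbF f = B) = B := by
    intro B hB
    obtain ⟨f₀, hf₀C, rfl⟩ := Finset.mem_image.mp hB
    have hf₀ : IsCycleMap G l f₀ := (Finset.mem_filter.mp hf₀C).2
    ext h
    constructor
    · intro hh
      obtain ⟨_, he⟩ := Finset.mem_filter.mp hh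
      rw [← he]
      exact self_mem_orbF h
    · intro hh
      obtain ⟨s, r, rfl⟩ := mem_orbF_iff.mp hh
      refine Finset.mem_filter.mpr ⟨?_, orbF_comp f₀ s r⟩
      exact Finset.mem_filter.mpr ⟨Finset.mem_univ _, isCycleMap_comp hf₀ s r⟩
  have key : ∀ B : Finset (Fin l → V), ∃ ε : ℤ, B ∈ O →
      (ε = 1 ∨ ε = -1) ∧
      (∑ f ∈ C.filter (fun f => orbF f = B), cycleSign o f) = (2 * l : ℤ) * ε ∧
      (C.filter (fun f => orbF f = B)).card = 2 * l := by
    intro B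
    by_cases hB : B ∈ O
    · obtain ⟨f₀, hf₀C, hBeq⟩ := Finset.mem_image.mp hB
      have hf₀ : IsCycleMap G l f₀ := (Finset.mem_filter.mp hf₀C).2
      refine ⟨cycleSign o f₀, fun _ => ⟨?_, ?_, ?_⟩⟩
      · unfold cycleSign
        rcases Nat.even_or_odd ((Finset.univ.filter
            (fun i : Fin l => o (f₀ i) (f₀ (cyclicSucc i)))).card) with he | hodd
        · left; exact he.neg_one_pow
        · right; exact hodd.neg_one_pow
      · rw [fiber_eq B hB, ← hBeq]
        have hconst : ∀ f ∈ orbF f₀, cycleSign o f = cycleSign o f₀ := by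
          intro f hf
          obtain ⟨s, r, rfl⟩ := mem_orbF_iff.mp hf
          cases s
          · exact cycleSign_rot o f₀ r
          · exact cycleSign_refl ho hf₀ hle r
        rw [Finset.sum_congr rfl hconst, Finset.sum_const, card_orbF hf₀.1 hl,
          nsmul_eq_mul]
        push_cast
        ring
      · rw [fiber_eq B hB, ← hBeq, card_orbF hf₀.1 hl]
    · exact ⟨0, fun h => absurd h hB⟩
  choose ε hε using key
  have hS : (∑ f ∈ C, cycleSign o f) = (2 * l : ℤ) * ∑ B ∈ O, ε B := by
    rw [← Finset.sum_fiberwise_of_maps_to hmaps (cycleSign o), Finset.mul_sum]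
    exact Finset.sum_congr rfl (fun B hB => ((hε B hB).2.1))
  have hN : C.card = O.card * (2 * l) := by
    rw [Finset.card_eq_sum_card_fiberwise hmaps]
    rw [Finset.sum_congr rfl (fun B hB => (hε B hB).2.2), Finset.sum_const, smul_eq_mul]
  have hml : (2 * l : ℤ) ≠ 0 := by positivity
  have hSS : signedCycleSum G o l = ∑ B ∈ O, ε B := by
    unfold signedCycleSum
    rw [← hC, hS]
    push_cast
    rw [Int.mul_ediv_cancel_left _ hml]
  have hCC : cycleCount G l = O.card := by
    unfold cycleCount
    rw [← hC, hN, Nat.mul_div_cancel _ (by omega : 0 < 2 * l)]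
  rw [hSS, hCC]
  rw [Int.ModEq]
  symm
  rw [← Int.ModEq]
  rw [Int.modEq_iff_dvd]
  have : (∑ B ∈ O, ε B) - (O.card : ℤ) = ∑ B ∈ O, (ε B - 1) := by
    rw [Finset.sum_sub_distrib, Finset.sum_const, nsmul_eq_mul, mul_one]
  rw [this]
  apply Finset.dvd_sum
  intro B hB
  rcases (hε B hB).1 with h1 | h1 <;> rw [h1] <;> norm_num


namespace ChordDiagram

variable {n : ℕ}

lemma card_endpoints (d : ChordDiagram n) (i : Fin n) : (d.endpoints i).card = 2 := by
  rw [endpoints, d.fiber_two]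

lemma lo_lt_hi (d : ChordDiagram n) (i : Fin n) : d.lo i < d.hi i :=
  Finset.min'_lt_max'_of_card _ (by rw [card_endpoints]; norm_num)

lemma chord_hi (d : ChordDiagram n) (i : Fin n) : d.chord (d.hi i) = i := by
  have h := (d.endpoints i).max'_mem (d.endpoints_nonempty i)
  exact (Finset.mem_filter.mp h).2

lemma dir_canonical_iff (d : ChordDiagram n) (i j : Fin n) :
    d.dir d.canonical i j ↔ (d.lo i < d.lo j ∧ d.lo j < d.hi i) := by
  have he : d.endOf d.canonical i = d.hi i := by
    unfold endOf canonical
    exact if_pos rfl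
  unfold dir
  rw [he]
  show InArc (d.lo i) (d.hi i) (d.lo j) ↔ _
  unfold InArc
  rw [if_pos (d.lo_lt_hi i)]

lemma isOrientation_dir (d : ChordDiagram n) :
    IsOrientation d.interGraph (d.dir d.canonical) := by
  intro x y hxy
  obtain ⟨hne, hcross⟩ : x ≠ y ∧ (d.Crosses x y ∨ d.Crosses y x) := hxy
  rw [dir_canonical_iff, dir_canonical_iff]
  have h1 := d.lo_lt_hi x
  have h2 := d.lo_lt_hi y
  have e1 : d.lo x ≠ d.lo y := fun h => hne (by rw [← d.chord_lo x, h, d.chord_lo])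
  have e2 : d.lo x ≠ d.hi y := fun h => hne (by rw [← d.chord_lo x, h, d.chord_hi])
  have e3 : d.hi x ≠ d.lo y := fun h => hne (by rw [← d.chord_hi x, h, d.chord_lo])
  have e4 : d.hi x ≠ d.hi y := fun h => hne (by rw [← d.chord_hi x, h, d.chord_hi])
  have v1 := Fin.val_ne_of_ne e1
  have v2 := Fin.val_ne_of_ne e2
  have v3 := Fin.val_ne_of_ne e3
  have v4 := Fin.val_ne_of_ne e4
  simp only [Crosses, Xor', Xor, Fin.lt_def] at hcross h1 h2 ⊢
  omega

end ChordDiagram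

end Aux

theorem Rk_modEq_cycleCount (k : ℕ) (hk : 2 ≤ k) {n : ℕ} (d : ChordDiagram n) :
    Rk k d ≡ (cycleCount d.interGraph (2 * k) : ℤ) [ZMOD 2] :=
  signed_modEq_count (by omega) ⟨k, by ring⟩ _ _ d.isOrientation_dir
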